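/- Let Q be a positive integer, h ∈ ℂ with h ≠ 0, and f, g ∈ ℂ^Q such that the vector v ∈ ℂ^Q defined by v_q = conj(f_q)·g_q is nonzero. Define γ* = √Q · (h/|h|) · v/‖v‖ ∈ ℂ^Q. Then ‖γ*‖² = Q and |h|² + 2·Re( conj(h) · ∑_{q=1}^Q conj(v_q) γ*_q ) + |∑_{q=1}^Q conj(v_q) γ*_q|² = ( |h| + √Q · ‖v‖ )². -/

import Mathlib

/-- Achievability part of Lemma 1: the reflection vector
`γ* = √Q (h/|h|) v/‖v‖` satisfies the power constraint `‖γ*‖² = Q` and attains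
the upper bound `(|h| + √Q ‖v‖)²` of the cost
`|h|² + 2 Re{conj(h) ∑ conj(v_q) γ_q} + |∑ conj(v_q) γ_q|²`,
where `v_q = conj(f_q) g_q`. -/
theorem stmt_1 (Q : ℕ) (hQ : 0 < Q) (h : ℂ) (hh : h ≠ 0)
    (f g v γ : EuclideanSpace ℂ (Fin Q))
    (hv : ∀ q, v q = (starRingEnd ℂ) (f q) * g q) (hv0 : v ≠ 0)
    (hγ : ∀ q, γ q = (Real.sqrt Q : ℂ) * (h / (‖h‖ : ℂ)) * (v q / (‖v‖ : ℂ))) :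
    ‖γ‖ ^ 2 = (Q : ℝ) ∧
    ‖h‖ ^ 2
      + 2 * (((starRingEnd ℂ) h) * ∑ q, (starRingEnd ℂ) (v q) * γ q).re
      + ‖∑ q, (starRingEnd ℂ) (v q) * γ q‖ ^ 2
    = (‖h‖ + Real.sqrt Q * ‖v‖) ^ 2 := by
  have hvnorm : (0:ℝ) < ‖v‖ := norm_pos_iff.mpr hv0
  have habs : (0:ℝ) < ‖h‖ := by
    simpa using (norm_pos_iff.mpr hh)
  have hvC : (‖v‖ : ℂ) ≠ 0 := by exact_mod_cast hvnorm.ne'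
  have hhC : ((‖h‖ : ℝ) : ℂ) ≠ 0 := by exact_mod_cast habs.ne'
  set c : ℂ := (Real.sqrt Q : ℂ) * (h / (‖h‖ : ℂ)) / (‖v‖ : ℂ) with hc
  have hγc : γ = c • v := by
    ext q
    simp only [PiLp.smul_apply, smul_eq_mul, hγ q, hc]
    ring
  have hcabs : ‖c‖ = Real.sqrt Q / ‖v‖ := by
    have h1 : ‖h / (‖h‖ : ℂ)‖ = 1 := by
      rw [norm_div]
      simp [habs.ne']
    rw [hc, norm_div, norm_mul, h1]
    simp [Real.sqrt_nonneg, hvnorm.le, abs_of_nonneg]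
  have hnγ : ‖γ‖ = Real.sqrt Q := by
    rw [hγc, norm_smul]
    have : ‖c‖ = ‖c‖ := rfl
    rw [this, hcabs]
    field_simp
  constructor
  · rw [hnγ, Real.sq_sqrt (Nat.cast_nonneg Q)]
  · have hS : (∑ q, (starRingEnd ℂ) (v q) * γ q) = c * (‖v‖ ^ 2 : ℝ) := by
      have hinner : (∑ q, (starRingEnd ℂ) (v q) * v q) = ((‖v‖ ^ 2 : ℝ) : ℂ) := by
        have h2 : ‖v‖ ^ 2 = ∑ q, ‖v q‖ ^ 2 := by
          rw [EuclideanSpace.norm_eq,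
            Real.sq_sqrt (Finset.sum_nonneg fun q _ => sq_nonneg _)]
        rw [h2]
        push_cast
        refine Finset.sum_congr rfl fun q _ => ?_
        rw [mul_comm, Complex.mul_conj, Complex.normSq_eq_norm_sq]
        norm_cast
      calc (∑ q, (starRingEnd ℂ) (v q) * γ q)
          = c * (∑ q, (starRingEnd ℂ) (v q) * v q) := by
            rw [Finset.mul_sum]
            refine Finset.sum_congr rfl fun q _ => ?_
            rw [hγc]
            simp only [PiLp.smul_apply, smul_eq_mul]
            ring
        _ = c * (‖v‖ ^ 2 : ℝ) := by rw [hinner]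
    have hSval : (∑ q, (starRingEnd ℂ) (v q) * γ q)
        = (Real.sqrt Q : ℂ) * (h / (‖h‖ : ℂ)) * (‖v‖ : ℂ) := by
      rw [hS, hc]
      push_cast
      field_simp
    rw [hSval]

    have hre : ((starRingEnd ℂ) h * ((Real.sqrt Q : ℂ) * (h / (‖h‖ : ℂ)) * (‖v‖ : ℂ))).re
        = Real.sqrt Q * ‖h‖ * ‖v‖ := by
      have hch : (starRingEnd ℂ) h * h = ((‖h‖ ^ 2 : ℝ) : ℂ) := by
        rw [mul_comm, Complex.mul_conj, Complex.normSq_eq_norm_sq]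
      have : (starRingEnd ℂ) h * ((Real.sqrt Q : ℂ) * (h / (‖h‖ : ℂ)) * (‖v‖ : ℂ))
          = (((Real.sqrt Q * ‖h‖ * ‖v‖ : ℝ)) : ℂ) := by
        have : (starRingEnd ℂ) h * ((Real.sqrt Q : ℂ) * (h / (‖h‖ : ℂ)) * (‖v‖ : ℂ))
            = (Real.sqrt Q : ℂ) * (((starRingEnd ℂ) h * h) / (‖h‖ : ℂ)) * (‖v‖ : ℂ) := by
          ring
        rw [this, hch]
        push_cast
        field_simp
      rw [this, Complex.ofReal_re]
    have habsS : ‖(Real.sqrt Q : ℂ) * (h / (‖h‖ : ℂ)) * (‖v‖ : ℂ)‖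
        = Real.sqrt Q * ‖v‖ := by
      rw [norm_mul, norm_mul, norm_div]
      simp [habs.ne', abs_of_nonneg, Real.sqrt_nonneg, hvnorm.le]
    rw [hre, habsS]
    ring
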